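/- Let N ≥ 1 be an integer and q ∈ ℂ with 0 < |q| < 1. Define τ_N(z) = z^{2/N−2} · Θ_{q^{2N}}(q z²)/Θ_{q^{2N}}(q z^{−2}). Then τ_N is periodic with period q^N: τ_N(q^N z) = τ_N(z), where the power z^{2/N} is computed with a determination of the logarithm satisfying log(q^N z) = N log q + log z. -/

import Mathlib

open Complex

/-- The infinite `q`-Pochhammer product `(z;p)_∞ = ∏_{n≥0} (1 − z pⁿ)`. -/
noncomputable def qPoch (z p : ℂ) : ℂ := ∏' n : ℕ, (1 - z * p ^ n)

/-- The Jacobi theta function `Θ_p(z) = (z;p)_∞ (p z⁻¹;p)_∞ (p;p)_∞`. -/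
noncomputable def jTheta (p z : ℂ) : ℂ := qPoch z p * qPoch (p * z⁻¹) p * qPoch p p

/-- The function `τ_N(z) = z^{2/N−2} Θ_{q^{2N}}(q z²)/Θ_{q^{2N}}(q z⁻²)`, the fractional power
`z^{2/N−2}` being computed via a fixed branch `Lg` of the logarithm. -/
noncomputable def tauN (N : ℕ) (q : ℂ) (Lg : ℂ → ℂ) (z : ℂ) : ℂ :=
  Complex.exp ((2 / (N : ℂ) - 2) * Lg z) * jTheta (q ^ (2 * N)) (q * z ^ 2)
    / jTheta (q ^ (2 * N)) (q * z⁻¹ ^ 2)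

lemma mult_aux {p : ℂ} (hp : ‖p‖ < 1) (z : ℂ) :
    Multipliable (fun n : ℕ => 1 - z * p ^ n) := by
  have h0 : Filter.Tendsto (fun n : ℕ => ‖z * p ^ n‖) Filter.atTop (nhds 0) := by
    have := (tendsto_pow_atTop_nhds_zero_of_norm_lt_one hp).const_mul z
    simpa using this.norm
  have h1 : ∀ᶠ n in Filter.atTop, ‖z * p ^ n‖ ≤ 1/2 :=
    h0.eventually_le_const (by norm_num)
  obtain ⟨k, hk⟩ := Filter.eventually_atTop.mp h1
  have hb : ∀ n : ℕ, ‖z * p ^ (n + k)‖ ≤ 1/2 := fun n => hk (n + k) (Nat.le_add_left k n)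
  have hne : ∀ n : ℕ, (1 : ℂ) - z * p ^ (n + k) ≠ 0 := by
    intro n h
    have h' : z * p ^ (n + k) = 1 := by linear_combination -h
    have := hb n
    rw [h'] at this
    norm_num at this
  have hsum : Summable (fun n : ℕ => Complex.log (1 - z * p ^ (n + k))) := by
    have hgeo : Summable (fun n : ℕ => (3/2 * (‖z‖ * ‖p‖ ^ k)) * ‖p‖ ^ n) :=
      (summable_geometric_of_lt_one (norm_nonneg p) hp).mul_left _
    apply Summable.of_norm_bounded hgeo
    intro n
    have h2 : (1 : ℂ) - z * p ^ (n + k) = 1 + (-(z * p ^ (n + k))) := by ring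
    rw [h2]
    have h3 := Complex.norm_log_one_add_half_le_self (z := -(z * p ^ (n + k)))
      (by rw [norm_neg]; exact hb n)
    refine h3.trans (le_of_eq ?_)
    rw [norm_neg, norm_mul, norm_pow, pow_add]
    ring
  have htail : Multipliable (fun n : ℕ => 1 - z * p ^ (n + k)) :=
    Complex.multipliable_of_summable_log hsum
  exact (HasProd.prod_range_mul (f := fun n : ℕ => 1 - z * p ^ n) (k := k)
    htail.hasProd).multipliable

lemma qPoch_shift {p : ℂ} (hp : ‖p‖ < 1) (z : ℂ) :
    qPoch z p = (1 - z) * qPoch (p * z) p := by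
  have htail : Multipliable (fun n : ℕ => 1 - z * p ^ (n + 1)) :=
    (mult_aux hp (z * p)).congr (fun n => by ring_nf)
  have h := tprod_eq_zero_mul' (f := fun n : ℕ => 1 - z * p ^ n) htail
  simp only [pow_zero, mul_one] at h
  rw [qPoch, h, qPoch]
  congr 1
  exact tprod_congr fun n => by ring

lemma jTheta_quasi {p : ℂ} (hp : ‖p‖ < 1) (hp0 : p ≠ 0) {w : ℂ} (hw : w ≠ 0) :
    jTheta p (p * w) = -w⁻¹ * jTheta p w := by
  have h1 : p * (p * w)⁻¹ = w⁻¹ := by field_simp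
  have h2 : qPoch w p = (1 - w) * qPoch (p * w) p := qPoch_shift hp w
  have h3 : qPoch w⁻¹ p = (1 - w⁻¹) * qPoch (p * w⁻¹) p := qPoch_shift hp w⁻¹
  have h4 : (1 : ℂ) - w⁻¹ = -w⁻¹ * (1 - w) := by field_simp; ring
  rw [jTheta, jTheta, h1, h3, h2, h4]
  ring

/-- `τ_N` is periodic with period `q^N`: `τ_N(q^N z) = τ_N(z)`, where the power `z^{2/N}` is
computed with a determination `Lg` of the logarithm satisfying
`log (q^N z) = N log q + log z`. -/
theorem stmt3 (N : ℕ) (hN : 1 ≤ N) (q : ℂ)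
    (hq0 : 0 < ‖q‖) (hq1 : ‖q‖ < 1)
    (Lg : ℂ → ℂ) (hLg : ∀ w : ℂ, w ≠ 0 → Complex.exp (Lg w) = w)
    (z : ℂ) (hz : z ≠ 0)
    (hbranch : Lg (q ^ N * z) = (N : ℂ) * Lg q + Lg z) :
    tauN N q Lg (q ^ N * z) = tauN N q Lg z := by
  have hqne : q ≠ 0 := by simpa using hq0.ne'
  have hNne : (N : ℂ) ≠ 0 := Nat.cast_ne_zero.mpr (by omega)
  set p : ℂ := q ^ (2 * N) with hp_def
  have hp : ‖p‖ < 1 := by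
    rw [hp_def, norm_pow]
    exact pow_lt_one₀ (norm_nonneg q) hq1 (by omega)
  have hp0 : p ≠ 0 := pow_ne_zero _ hqne
  have hqz : q * z ^ 2 ≠ 0 := mul_ne_zero hqne (pow_ne_zero _ hz)
  set w : ℂ := q * ((q ^ N * z)⁻¹) ^ 2 with hw_def
  have hw0 : w ≠ 0 :=
    mul_ne_zero hqne (pow_ne_zero _ (inv_ne_zero (mul_ne_zero (pow_ne_zero _ hqne) hz)))
  have e1 : q * (q ^ N * z) ^ 2 = p * (q * z ^ 2) := by rw [hp_def]; ring
  have e2 : q * z⁻¹ ^ 2 = p * w := by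
    rw [hw_def, hp_def]
    field_simp
    ring
  have hT1 : jTheta p (q * (q ^ N * z) ^ 2) = -(q * z ^ 2)⁻¹ * jTheta p (q * z ^ 2) := by
    rw [e1]; exact jTheta_quasi hp hp0 hqz
  have hT2 : jTheta p (q * z⁻¹ ^ 2) = -w⁻¹ * jTheta p w := by
    rw [e2]; exact jTheta_quasi hp hp0 hw0
  have hE : Complex.exp ((2 / (N : ℂ) - 2) * Lg (q ^ N * z)) =
      Complex.exp ((2 - 2 * (N : ℂ)) * Lg q) * Complex.exp ((2 / (N : ℂ) - 2) * Lg z) := by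
    rw [hbranch, ← Complex.exp_add]
    congr 1
    field_simp
  have hEq : Complex.exp ((2 - 2 * (N : ℂ)) * Lg q) * p = q ^ 2 := by
    have hpe : Complex.exp ((2 * (N : ℂ)) * Lg q) = p := by
      rw [show (2 * (N : ℂ)) = ((2 * N : ℕ) : ℂ) by push_cast; ring,
        Complex.exp_nat_mul, hLg q hqne, hp_def]
    rw [← hpe, ← Complex.exp_add,
      show (2 - 2 * (N : ℂ)) * Lg q + (2 * (N : ℂ)) * Lg q = ((2 : ℕ) : ℂ) * Lg q by push_cast; ring,
      Complex.exp_nat_mul, hLg q hqne]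
  have key : Complex.exp ((2 - 2 * (N : ℂ)) * Lg q) * (-(q * z ^ 2)⁻¹) = -w := by
    have hwq : w * (q * z ^ 2) * p = q ^ 2 := by
      rw [hw_def, hp_def]
      field_simp
      ring
    have hE0 : Complex.exp ((2 - 2 * (N : ℂ)) * Lg q) = w * (q * z ^ 2) := by
      have h := hEq
      rw [← hwq] at h
      exact mul_right_cancel₀ hp0 h
    rw [hE0]
    field_simp
  rw [tauN, tauN, ← hp_def, hE, hT1, ← hw_def, hT2]
  simp only [div_eq_mul_inv]
  rw [mul_inv (-w⁻¹) (jTheta p w), inv_neg, inv_inv]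
  linear_combination (Complex.exp ((2 * ((N : ℂ))⁻¹ - 2) * Lg z) * jTheta p (q * z ^ 2)
    * (jTheta p w)⁻¹) * key
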